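/- Let (X,d) be a metric space, p, q ∈ X, and z ∈ X. Suppose there exist constants C ≥ 0, α > 0 and r₀ > 0 such that e_{p,q}(x) ≤ C·d(x,z)^{1+α} for every x ∈ X with d(x,z) < r₀. Then for every locally Lipschitz function f : X → ℝ, lip(f + d(p,·))(z) = lip(f − d(q,·))(z). -/

import Mathlib

open Filter Set
open scoped ENNReal Topology

/-- The local Lipschitz constant (local slope) of `f` at `x`:
`lip f (x) = limsup_{y → x, y ≠ x} |f y - f x| / d(y,x)`, which equals `0` at
isolated points (where the punctured neighbourhood filter is trivial). -/
noncomputable def lipConst {X : Type*} [MetricSpace X] (f : X → ℝ) (x : X) : ℝ≥0∞ :=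
  Filter.limsup (fun y => ENNReal.ofReal (|f y - f x| / dist y x)) (𝓝[≠] x)

private lemma lipConst_le_aux {X : Type*} [MetricSpace X] (z : X) (g₁ g₂ : X → ℝ)
    (C α r₀ : ℝ) (hC : 0 ≤ C) (hα : 0 < α) (hr₀ : 0 < r₀)
    (h : ∀ y : X, dist y z < r₀ →
      |(g₁ y - g₁ z) - (g₂ y - g₂ z)| ≤ C * dist y z ^ (1 + α)) :
    lipConst g₁ z ≤ lipConst g₂ z := by
  rcases eq_or_neBot (𝓝[≠] z) with hbot | hne
  · simp [lipConst, hbot]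
  apply ENNReal.le_of_forall_pos_le_add
  intro ε hε _
  -- the function `y ↦ C * dist y z ^ α` tends to `0` at `z`
  have hd : Tendsto (fun y : X => dist y z) (𝓝 z) (𝓝 0) :=
    (continuous_id.dist continuous_const).tendsto' z 0 (by simp)
  have hrpow : Tendsto (fun y : X => C * dist y z ^ α) (𝓝 z) (𝓝 0) := by
    have h0 : ContinuousAt (fun t : ℝ => t ^ α) 0 :=
      Real.continuousAt_rpow_const 0 α (Or.inr hα.le)
    have := (h0.tendsto.comp hd)
    rw [Real.zero_rpow hα.ne'] at this
    simpa using this.const_mul C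
  have hsmall : ∀ᶠ y in 𝓝 z, C * dist y z ^ α < (ε : ℝ) := by
    exact hrpow.eventually (gt_mem_nhds (by exact_mod_cast hε))
  have hball : ∀ᶠ y in 𝓝 z, dist y z < r₀ := by
    have : Metric.ball z r₀ ∈ 𝓝 z := Metric.ball_mem_nhds z hr₀
    filter_upwards [this] with y hy using by simpa [Metric.mem_ball] using hy
  have hev : ∀ᶠ y in 𝓝[≠] z,
      ENNReal.ofReal (|g₁ y - g₁ z| / dist y z)
        ≤ ENNReal.ofReal (|g₂ y - g₂ z| / dist y z) + (ε : ℝ≥0∞) := by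
    filter_upwards [eventually_nhdsWithin_of_eventually_nhds hsmall,
      eventually_nhdsWithin_of_eventually_nhds hball,
      self_mem_nhdsWithin] with y hsy hby (hy : y ≠ z)
    have hdy : 0 < dist y z := dist_pos.2 hy
    have habs : |g₁ y - g₁ z| ≤ |g₂ y - g₂ z| + C * dist y z ^ (1 + α) := by
      have := h y hby
      have := abs_sub_abs_le_abs_sub (g₁ y - g₁ z) (g₂ y - g₂ z)
      linarith [h y hby]
    have hpow : C * dist y z ^ (1 + α) / dist y z = C * dist y z ^ α := by
      rw [Real.rpow_add hdy, Real.rpow_one]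
      field_simp
    have hdiv : |g₁ y - g₁ z| / dist y z ≤ |g₂ y - g₂ z| / dist y z + C * dist y z ^ α := by
      rw [← hpow, ← add_div]
      gcongr
    calc ENNReal.ofReal (|g₁ y - g₁ z| / dist y z)
        ≤ ENNReal.ofReal (|g₂ y - g₂ z| / dist y z + (ε : ℝ)) := by
          apply ENNReal.ofReal_le_ofReal
          linarith [hsy]
      _ ≤ ENNReal.ofReal (|g₂ y - g₂ z| / dist y z) + ENNReal.ofReal (ε : ℝ) :=
          ENNReal.ofReal_add_le
      _ = ENNReal.ofReal (|g₂ y - g₂ z| / dist y z) + (ε : ℝ≥0∞) := by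
          rw [ENNReal.ofReal_coe_nnreal]
  calc lipConst g₁ z
      ≤ limsup (fun y => ENNReal.ofReal (|g₂ y - g₂ z| / dist y z) + (ε : ℝ≥0∞)) (𝓝[≠] z) :=
        limsup_le_limsup hev
    _ = lipConst g₂ z + (ε : ℝ≥0∞) := by
        exact limsup_add_const (𝓝[≠] z)
          (fun y => ENNReal.ofReal (|g₂ y - g₂ z| / dist y z)) _
          (by isBoundedDefault) (by isBoundedDefault)

/-- If the excess `e_{p,q}` satisfies an Abresch–Gromoll type bound
`e_{p,q}(x) ≤ C d(x,z)^{1+α}` near `z`, then for every locally Lipschitz `f` the local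
slopes of `f + d(p,·)` and `f - d(q,·)` agree at `z` (Lemma 6.4 of the paper). -/
theorem lip_add_dist_eq_lip_sub_dist {X : Type*} [MetricSpace X] (p q z : X)
    (C α r₀ : ℝ) (hC : 0 ≤ C) (hα : 0 < α) (hr₀ : 0 < r₀)
    (hexcess : ∀ x : X, dist x z < r₀ →
      dist p x + dist x q - dist p q ≤ C * dist x z ^ (1 + α))
    (f : X → ℝ) (hf : LocallyLipschitz f) :
    lipConst (fun y => f y + dist p y) z = lipConst (fun y => f y - dist q y) z := by
  set g₁ : X → ℝ := fun y => f y + dist p y with hg₁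
  set g₂ : X → ℝ := fun y => f y - dist q y with hg₂
  -- the excess at `z` vanishes
  have hez : dist p z + dist z q - dist p q = 0 := by
    have h1 : dist p z + dist z q - dist p q ≤ 0 := by
      have := hexcess z (by simpa using hr₀)
      simpa [Real.zero_rpow (by positivity : (1 : ℝ) + α ≠ 0)] using this
    have h2 : dist p q ≤ dist p z + dist z q := dist_triangle p z q
    linarith
  have key : ∀ y : X, dist y z < r₀ →
      |(g₁ y - g₁ z) - (g₂ y - g₂ z)| ≤ C * dist y z ^ (1 + α) := by
    intro y hy
    have hdiff : (g₁ y - g₁ z) - (g₂ y - g₂ z)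
        = dist p y + dist y q - dist p q := by
      simp only [hg₁, hg₂]
      have : dist q y = dist y q := dist_comm q y
      have : dist q z = dist z q := dist_comm q z
      rw [dist_comm q y, dist_comm q z]
      linarith [hez]
    rw [hdiff]
    have hnn : 0 ≤ dist p y + dist y q - dist p q := by
      linarith [dist_triangle p y q]
    rw [abs_of_nonneg hnn]
    exact hexcess y hy
  refine le_antisymm ?_ ?_
  · exact lipConst_le_aux z g₁ g₂ C α r₀ hC hα hr₀ key
  · refine lipConst_le_aux z g₂ g₁ C α r₀ hC hα hr₀ ?_
    intro y hy
    rw [abs_sub_comm]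
    exact key y hy
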